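/- Let U be a submodular universe, k ∈ ℕ, and P a regular k-profile in U. Let D_P ⊆ P be a set containing, for every regular k-profile P' ≠ P in U, a separation which efficiently distinguishes P from P', and let m be the number of maximal elements of D_P. Then there is a star σ ⊆ P of size at most m having property Eff(P) such that every regular k-profile in U other than P contains the inverse of some element of σ (i.e. δ_e(P) ≤ m). -/

import Mathlib

namespace SepDemo

/-- A universe of separations: a finite lattice with an order-reversing involution. -/
structure SepUniverse (U : Type*) [Lattice U] [Fintype U] where
  inv : U → U
  inv_inv : ∀ s, inv (inv s) = s
  le_iff : ∀ r s : U, r ≤ s ↔ inv s ≤ inv r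

/-- A submodular universe: a universe with a submodular order function. -/
structure SubmodUniverse (U : Type*) [Lattice U] [Fintype U] extends SepUniverse U where
  ord : U → ℕ
  ord_inv : ∀ s, ord (inv s) = ord s
  submod : ∀ s t : U, ord (s ⊔ t) + ord (s ⊓ t) ≤ ord s + ord t

variable {U : Type*} [Lattice U] [Fintype U]

/-- A separation system inside a universe: a subset closed under the involution. -/
def SepSystem (𝒰 : SepUniverse U) (S : Set U) : Prop :=
  ∀ s ∈ S, 𝒰.inv s ∈ S

/-- An orientation of `S`: contains, for each `s ∈ S`, exactly one of `s`, `s*`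
(just `s` itself if `s` is degenerate). -/
def IsOrientation (𝒰 : SepUniverse U) (S O : Set U) : Prop :=
  O ⊆ S ∧ ∀ s ∈ S, (s ∈ O ∨ 𝒰.inv s ∈ O) ∧ (s ∈ O → 𝒰.inv s ∈ O → s = 𝒰.inv s)

/-- Consistency: no `r, s ∈ O` with `{r,r*} ≠ {s,s*}` and `r* ≤ s`. -/
def Consistent (𝒰 : SepUniverse U) (O : Set U) : Prop :=
  ∀ r ∈ O, ∀ s ∈ O, ({r, 𝒰.inv r} : Set U) ≠ ({s, 𝒰.inv s} : Set U) → ¬ 𝒰.inv r ≤ s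

/-- A profile of `S`: a consistent orientation satisfying the profile property. -/
def IsProfile (𝒰 : SepUniverse U) (S P : Set U) : Prop :=
  IsOrientation 𝒰 S P ∧ Consistent 𝒰 P ∧ ∀ r ∈ P, ∀ s ∈ P, 𝒰.inv (r ⊔ s) ∉ P

/-- Regular: contains no cosmall separation. -/
def Regular (𝒰 : SepUniverse U) (P : Set U) : Prop :=
  ∀ s ∈ P, ¬ 𝒰.inv s ≤ s

/-- Two separations are nested. -/
def Nested (𝒰 : SepUniverse U) (r s : U) : Prop :=
  r ≤ s ∨ r ≤ 𝒰.inv s ∨ 𝒰.inv r ≤ s ∨ 𝒰.inv r ≤ 𝒰.inv s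

/-- A set of separations is nested if its members are pairwise nested. -/
def NestedSet (𝒰 : SepUniverse U) (N : Set U) : Prop :=
  ∀ r ∈ N, ∀ s ∈ N, Nested 𝒰 r s

/-- `s` distinguishes the orientations `O₁` and `O₂`. -/
def Distinguishes (𝒰 : SepUniverse U) (s : U) (O₁ O₂ : Set U) : Prop :=
  (s ∈ O₁ ∧ 𝒰.inv s ∈ O₂) ∨ (𝒰.inv s ∈ O₁ ∧ s ∈ O₂)

/-- Two orientations are distinguishable. -/
def Distinguishable (𝒰 : SepUniverse U) (P Q : Set U) : Prop :=
  ∃ s : U, Distinguishes 𝒰 s P Q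

/-- Structural submodularity of a separation system. -/
def StructSubmodular (S : Set U) : Prop :=
  ∀ s ∈ S, ∀ t ∈ S, s ⊔ t ∈ S ∨ s ⊓ t ∈ S

/-- `s` is trivial in `S`. -/
def IsTrivialIn (𝒰 : SepUniverse U) (S : Set U) (s : U) : Prop :=
  ∃ r ∈ S, ({r, 𝒰.inv r} : Set U) ≠ ({s, 𝒰.inv s} : Set U) ∧ s ≤ r ∧ s ≤ 𝒰.inv r

/-- A star of separations. -/
def IsStar (𝒰 : SepUniverse U) (σ : Set U) : Prop :=
  ∀ r ∈ σ, ∀ s ∈ σ, r ≠ s → r ≤ 𝒰.inv s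

/-- The shift `σ_x^{s₀}` of a star `σ` at `x ∈ σ` to `s₀`. -/
def shiftStar (𝒰 : SepUniverse U) (σ : Set U) (x s₀ : U) : Set U :=
  insert (x ⊔ s₀) ((fun y => y ⊓ 𝒰.inv s₀) '' (σ \ {x}))

/-- `s₀` emulates `r` in `S`. -/
def Emulates (𝒰 : SepUniverse U) (S : Set U) (s₀ r : U) : Prop :=
  r ≤ s₀ ∧ ∀ t ∈ S, t ≠ 𝒰.inv r → r ≤ t → t ⊔ s₀ ∈ S

/-- `s₀` emulates `r` in `S` for a set `F` of stars. -/
def EmulatesFor (𝒰 : SepUniverse U) (S : Set U) (F : Set (Set U)) (s₀ r : U) : Prop :=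
  Emulates 𝒰 S s₀ r ∧
    ∀ σ ∈ F, 𝒰.inv r ∉ σ → ∀ x ∈ σ, r ≤ x → shiftStar 𝒰 σ x s₀ ∈ F

/-- `F` forces `s`. -/
def Forces (𝒰 : SepUniverse U) (F : Set (Set U)) (s : U) : Prop :=
  ({𝒰.inv s} : Set U) ∈ F

/-- `S` is `F`-separable. -/
def FSeparable (𝒰 : SepUniverse U) (S : Set U) (F : Set (Set U)) : Prop :=
  ∀ r₁ ∈ S, ∀ r₂ ∈ S,
    ¬ IsTrivialIn 𝒰 S r₁ → ¬ IsTrivialIn 𝒰 S r₂ →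
    r₁ ≠ 𝒰.inv r₁ → r₂ ≠ 𝒰.inv r₂ →
    ¬ Forces 𝒰 F r₁ → ¬ Forces 𝒰 F r₂ →
    r₁ ≤ 𝒰.inv r₂ →
    ∃ s₀ ∈ S, r₁ ≤ s₀ ∧ s₀ ≤ 𝒰.inv r₂ ∧
      EmulatesFor 𝒰 S F s₀ r₁ ∧ EmulatesFor 𝒰 S F (𝒰.inv s₀) r₂

/-- `r` is `F`-critical. -/
def FCritical (𝒰 : SepUniverse U) (F : Set (Set U)) (r : U) : Prop :=
  (∃ σ ∈ F, r ∈ σ) ∧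
    ¬ ∃ σ' ∈ F, σ' ∩ ({r, 𝒰.inv r} : Set U) = ({𝒰.inv r} : Set U)

/-- `S` is critically `F`-separable. -/
def CritFSeparable (𝒰 : SepUniverse U) (S : Set U) (F : Set (Set U)) : Prop :=
  ∀ r₁ ∈ S, ∀ r₂ ∈ S, FCritical 𝒰 F r₁ → FCritical 𝒰 F r₂ → r₁ ≤ 𝒰.inv r₂ →
    ∃ s₀ ∈ S, EmulatesFor 𝒰 S F s₀ r₁ ∧ EmulatesFor 𝒰 S F (𝒰.inv s₀) r₂

/-- An `F`-tangle of `S`: a consistent orientation including no member of `F`. -/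
def FTangle (𝒰 : SepUniverse U) (S : Set U) (F : Set (Set U)) (O : Set U) : Prop :=
  IsOrientation 𝒰 S O ∧ Consistent 𝒰 O ∧ ∀ σ ∈ F, ¬ σ ⊆ O

/-- `F` is standard for `S`: it forces all trivial separations of `S`. -/
def StandardFor (𝒰 : SepUniverse U) (S : Set U) (F : Set (Set U)) : Prop :=
  ∀ r ∈ S, IsTrivialIn 𝒰 S r → ({𝒰.inv r} : Set U) ∈ F

/-- An `S`-tree: a finite tree together with edge labels in `S` commuting with
the involution. -/
structure STree (𝒰 : SepUniverse U) (S : Set U) where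
  V : Type
  fintypeV : Fintype V
  G : SimpleGraph V
  isTree : G.IsTree
  label : V → V → U
  label_mem : ∀ x y, G.Adj x y → label x y ∈ S
  label_inv : ∀ x y, G.Adj x y → label y x = 𝒰.inv (label x y)

namespace STree

variable {𝒰 : SepUniverse U} {S : Set U}

/-- The star `α(t)` associated with a node `t`. -/
def nodeStar (T : STree 𝒰 S) (t : T.V) : Set U :=
  {u | ∃ s, T.G.Adj s t ∧ T.label s t = u}

/-- The `S`-tree is over `F`. -/
def Over (T : STree 𝒰 S) (F : Set (Set U)) : Prop :=
  ∀ t : T.V, T.nodeStar t ∈ F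

/-- Irredundance of an `S`-tree. -/
def Irredundant (T : STree 𝒰 S) : Prop :=
  ∀ t t' t'' : T.V, T.G.Adj t' t → T.G.Adj t'' t → t' ≠ t'' →
    T.label t' t ≠ T.label t'' t

/-- The set of edge labels of the tree. -/
def labels (T : STree 𝒰 S) : Set U :=
  {u | ∃ x y, T.G.Adj x y ∧ T.label x y = u}

/-- `t` is a sink of the orientation of the tree induced by `P`. -/
def IsSinkOf (T : STree 𝒰 S) (P : Set U) (t : T.V) : Prop :=
  ∀ s, T.G.Adj s t → T.label s t ∈ P

/-- The degree of a node. -/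
noncomputable def deg (T : STree 𝒰 S) (t : T.V) : ℕ :=
  (T.G.neighborSet t).ncard

/-- The maximum degree of the tree. -/
noncomputable def maxDeg (T : STree 𝒰 S) : ℕ :=
  sSup {n | ∃ t : T.V, T.deg t = n}

end STree

/-- A tree of tangles for `S`: an irredundant `S`-tree whose edge labels
distinguish every two distinct regular profiles of `S`. -/
def TreeOfTangles (𝒰 : SepUniverse U) (S : Set U) (T : STree 𝒰 S) : Prop :=
  T.Irredundant ∧
    ∀ P Q : Set U, IsProfile 𝒰 S P → Regular 𝒰 P → IsProfile 𝒰 S Q → Regular 𝒰 Q →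
      P ≠ Q → ∃ s ∈ T.labels, Distinguishes 𝒰 s P Q

/-- `δ(P)`: the minimum size of a subset of `P` distinguishing `P` from every
other regular profile of `S`. -/
noncomputable def deltaP (𝒰 : SepUniverse U) (S P : Set U) : ℕ :=
  sInf {n | ∃ D : Set U, D ⊆ P ∧ D.ncard = n ∧
    ∀ Q : Set U, IsProfile 𝒰 S Q → Regular 𝒰 Q → Q ≠ P →
      ∃ s ∈ D, Distinguishes 𝒰 s P Q}

/-- `S_k`: the separations of order less than `k`. -/
def Sk (𝒱 : SubmodUniverse U) (k : ℕ) : Set U := {s | 𝒱.ord s < k}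

/-- `s` distinguishes `P` and `Q` efficiently. -/
def EffDistinguishes (𝒱 : SubmodUniverse U) (s : U) (P Q : Set U) : Prop :=
  Distinguishes 𝒱.toSepUniverse s P Q ∧
    ∀ t : U, Distinguishes 𝒱.toSepUniverse t P Q → 𝒱.ord s ≤ 𝒱.ord t

/-- Property `Eff(P)` of a star `σ`. -/
def EffProp (𝒱 : SubmodUniverse U) (σ P : Set U) : Prop :=
  ¬ ∃ s ∈ σ, ∃ s' ∈ P, s ≤ s' ∧ 𝒱.ord s' < 𝒱.ord s

/-- `s` is a splice for `r`. -/
def SpliceFor (𝒱 : SubmodUniverse U) (s r : U) : Prop :=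
  r ≤ s ∧ ¬ ∃ t : U, r ≤ t ∧ t ≤ s ∧ 𝒱.ord t < 𝒱.ord s

/-- `s` is a splice between `r₁` and `r₂`. -/
def SpliceBetween (𝒱 : SubmodUniverse U) (s r₁ r₂ : U) : Prop :=
  r₁ ≤ s ∧ s ≤ r₂ ∧ ∀ t : U, r₁ ≤ t → t ≤ r₂ → 𝒱.ord s ≤ 𝒱.ord t

/-- The set `F_e` of stars in `S_k` included in at most one profile of `𝔓` and
satisfying `Eff(P)` whenever included in `P ∈ 𝔓`. -/
def Fe (𝒱 : SubmodUniverse U) (k : ℕ) (𝔓 : Set (Set U)) : Set (Set U) :=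
  {σ | σ ⊆ Sk 𝒱 k ∧ IsStar 𝒱.toSepUniverse σ ∧
    (∀ P ∈ 𝔓, ∀ Q ∈ 𝔓, σ ⊆ P → σ ⊆ Q → P = Q) ∧
    (∀ P ∈ 𝔓, σ ⊆ P → EffProp 𝒱 σ P)}

/-- `δ_e(P)`: the minimum size of a star `σ ⊆ P` with `Eff(P)` such that every
other regular profile of `S_k` contains the inverse of some element of `σ`. -/
noncomputable def deltaE (𝒱 : SubmodUniverse U) (k : ℕ) (P : Set U) : ℕ :=
  sInf {n | ∃ σ : Set U, σ ⊆ P ∧ IsStar 𝒱.toSepUniverse σ ∧ EffProp 𝒱 σ P ∧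
    σ.ncard = n ∧
    ∀ Q : Set U, IsProfile 𝒱.toSepUniverse (Sk 𝒱 k) Q → Regular 𝒱.toSepUniverse Q →
      Q ≠ P → ∃ s ∈ σ, 𝒱.inv s ∈ Q}

/-- `δ_{e,max}`: maximum of `δ_e` over all regular profiles of `S_k`. -/
noncomputable def deltaEMax (𝒱 : SubmodUniverse U) (k : ℕ) : ℕ :=
  sSup {n | ∃ P : Set U, IsProfile 𝒱.toSepUniverse (Sk 𝒱 k) P ∧
    Regular 𝒱.toSepUniverse P ∧ deltaE 𝒱 k P = n}

/-- `P` is a profile in `U`: a `k`-profile for some `k`. -/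
def ProfileIn (𝒱 : SubmodUniverse U) (P : Set U) : Prop :=
  ∃ k : ℕ, IsProfile 𝒱.toSepUniverse (Sk 𝒱 k) P

/-- Strong robustness of a profile. -/
def StronglyRobust (𝒱 : SubmodUniverse U) (P : Set U) : Prop :=
  ∀ s ∈ P, ∀ r : U, 𝒱.ord (s ⊔ r) ≤ 𝒱.ord s → 𝒱.ord (s ⊔ 𝒱.inv r) ≤ 𝒱.ord s →
    (s ⊔ r ∈ P ∨ s ⊔ 𝒱.inv r ∈ P)

/-- `O` weakly orients a separation as `s'` if `s' ≤ r` for some `r ∈ O`. -/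
def WeaklyOrientsAs (O : Set U) (s' : U) : Prop :=
  ∃ r ∈ O, s' ≤ r

/-- `O` weakly orients `s` (as `s` or as `s*`). -/
def WeaklyOrients (𝒰 : SepUniverse U) (O : Set U) (s : U) : Prop :=
  WeaklyOrientsAs O s ∨ WeaklyOrientsAs O (𝒰.inv s)

/-- The set `F_d` of stars, relative to the set of profiles `𝔓`. -/
def Fd (𝒱 : SubmodUniverse U) (𝔓 : Set (Set U)) : Set (Set U) :=
  {σ | IsStar 𝒱.toSepUniverse σ ∧
    (∀ P ∈ 𝔓, ∀ Q ∈ 𝔓, σ ⊆ P → σ ⊆ Q → P = Q) ∧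
    (∀ P ∈ 𝔓, ¬ σ ⊆ P → ∃ s ∈ σ, WeaklyOrientsAs P (𝒱.inv s)) ∧
    (∀ P ∈ 𝔓, σ ⊆ P → EffProp 𝒱 σ P)}
/- ### Auxiliary material for the proof of Statement 9 -/

lemma SepUniverse.inv_le_inv (𝒰 : SepUniverse U) {r s : U} (h : r ≤ s) :
    𝒰.inv s ≤ 𝒰.inv r := (𝒰.le_iff r s).mp h

lemma SepUniverse.le_inv_iff (𝒰 : SepUniverse U) (a b : U) :
    a ≤ 𝒰.inv b ↔ b ≤ 𝒰.inv a := by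
  rw [𝒰.le_iff a (𝒰.inv b), 𝒰.inv_inv]

lemma SepUniverse.inv_sup (𝒰 : SepUniverse U) (x y : U) :
    𝒰.inv (x ⊔ y) = 𝒰.inv x ⊓ 𝒰.inv y := by
  apply le_antisymm
  · exact le_inf (𝒰.inv_le_inv le_sup_left) (𝒰.inv_le_inv le_sup_right)
  · rw [𝒰.le_inv_iff]
    refine sup_le ?_ ?_
    · rw [← 𝒰.le_inv_iff]; exact inf_le_left
    · rw [← 𝒰.le_inv_iff]; exact inf_le_right

lemma SepUniverse.inv_inf (𝒰 : SepUniverse U) (x y : U) :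
    𝒰.inv (x ⊓ y) = 𝒰.inv x ⊔ 𝒰.inv y := by
  have h := 𝒰.inv_sup (𝒰.inv x) (𝒰.inv y)
  rw [𝒰.inv_inv, 𝒰.inv_inv] at h
  rw [← h, 𝒰.inv_inv]

/-- Consistent orientations are "down-closed", up to degenerate cases. -/
lemma down_closed (𝒰 : SepUniverse U) {S O : Set U} (hO : IsOrientation 𝒰 S O)
    (hC : Consistent 𝒰 O) {a b : U} (ha : a ∈ O) (hb : b ∈ S) (hba : b ≤ a) :
    b ∈ O ∨ a = 𝒰.inv b := by
  rcases (hO.2 b hb).1 with h | h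
  · exact Or.inl h
  by_cases hset : ({𝒰.inv b, 𝒰.inv (𝒰.inv b)} : Set U) = ({a, 𝒰.inv a} : Set U)
  · have hmem : 𝒰.inv b ∈ ({a, 𝒰.inv a} : Set U) := by
      rw [← hset]; exact Set.mem_insert _ _
    rcases Set.mem_insert_iff.mp hmem with h1 | h1
    · exact Or.inr h1.symm
    · have h2 : b = a := by
        have h3 := congrArg 𝒰.inv (Set.mem_singleton_iff.mp h1)
        rwa [𝒰.inv_inv, 𝒰.inv_inv] at h3
      exact Or.inl (h2 ▸ ha)
  · exact absurd (by rwa [𝒰.inv_inv]) (hC (𝒰.inv b) h a ha hset)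

/-- A regular profile never contains both a separation and its inverse. -/
lemma not_inv_mem (𝒰 : SepUniverse U) {S P : Set U} (hP : IsProfile 𝒰 S P)
    (hreg : Regular 𝒰 P) {s : U} (hs : s ∈ P) : 𝒰.inv s ∉ P := by
  intro h
  have he : s = 𝒰.inv s := (hP.1.2 s (hP.1.1 hs)).2 hs h
  exact hreg s hs (by rw [← he])

/-- If `s ≤ t` with `s, t ∈ P` and the regular profile `Q` contains `s*`,
then `Q` contains `t*`. -/
lemma cover_trans (𝒱 : SubmodUniverse U) {k : ℕ} {P Q : Set U}
    (hP : IsProfile 𝒱.toSepUniverse (Sk 𝒱 k) P) (hregP : Regular 𝒱.toSepUniverse P)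
    (hQ : IsProfile 𝒱.toSepUniverse (Sk 𝒱 k) Q) {s t : U}
    (hsP : s ∈ P) (htP : t ∈ P) (hst : s ≤ t) (hsQ : 𝒱.inv s ∈ Q) :
    𝒱.inv t ∈ Q := by
  have htS : 𝒱.inv t ∈ Sk 𝒱 k := by
    have h1 : t ∈ Sk 𝒱 k := hP.1.1 htP
    simpa [Sk, 𝒱.ord_inv] using h1
  have hle : 𝒱.inv t ≤ 𝒱.inv s := 𝒱.toSepUniverse.inv_le_inv hst
  rcases down_closed 𝒱.toSepUniverse hQ.1 hQ.2.1 hsQ htS hle with h | h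
  · exact h
  · rw [𝒱.inv_inv] at h
    exact absurd (by rw [h]; exact htP) (not_inv_mem 𝒱.toSepUniverse hP hregP hsP)

/-- Size of the down-set of an element. -/
noncomputable def dcard (x : U) : ℕ := {y : U | y ≤ x}.ncard

lemma dcard_le_card (x : U) : dcard x ≤ Fintype.card U :=
  calc dcard x ≤ (Set.univ : Set U).ncard :=
        Set.ncard_le_ncard (Set.subset_univ _) (Set.toFinite _)
    _ = Fintype.card U := by rw [Set.ncard_univ, Nat.card_eq_fintype_card]

lemma dcard_lt_dcard {b r : U} (hle : b ≤ r) (hne : b ≠ r) : dcard b < dcard r := by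
  apply Set.ncard_lt_ncard _ (Set.toFinite _)
  have hsub : {y : U | y ≤ b} ⊆ {y : U | y ≤ r} := fun y hy => le_trans hy hle
  refine hsub.ssubset_of_ne fun hEq => hne ?_
  have hrb : r ≤ b := by
    have h1 : r ∈ {y : U | y ≤ b} := hEq ▸ (le_refl r : r ∈ {y : U | y ≤ r})
    exact h1
  exact le_antisymm hle hrb

/-- The potential function used in the extremal argument. -/
noncomputable def psi (𝒱 : SubmodUniverse U) (σ : Finset U) : ℕ :=
  (∑ x ∈ σ, 𝒱.ord x) * (Fintype.card U * Fintype.card U + 1) + ∑ x ∈ σ, dcard x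

lemma sum_dcard_lt (σ : Finset U) :
    ∑ x ∈ σ, dcard x < Fintype.card U * Fintype.card U + 1 := by
  have h1 : ∑ x ∈ σ, dcard x ≤ ∑ _x ∈ σ, Fintype.card U :=
    Finset.sum_le_sum fun x _ => dcard_le_card x
  have h2 : ∑ _x ∈ σ, Fintype.card U = σ.card * Fintype.card U := by
    rw [Finset.sum_const, smul_eq_mul]
  have h3 : σ.card ≤ Fintype.card U := Finset.card_le_univ σ
  have h4 : σ.card * Fintype.card U ≤ Fintype.card U * Fintype.card U :=
    Nat.mul_le_mul_right _ h3
  omega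

/-- Replacing `r ∈ σ` by an element of strictly smaller order, or by a strictly
smaller element of no larger order, strictly decreases the potential. -/
lemma psi_replace_lt [DecidableEq U] (𝒱 : SubmodUniverse U) {σ : Finset U} {r b : U}
    (hr : r ∈ σ)
    (h : 𝒱.ord b < 𝒱.ord r ∨ (𝒱.ord b ≤ 𝒱.ord r ∧ b ≤ r ∧ b ≠ r)) :
    psi 𝒱 (insert b (σ.erase r)) < psi 𝒱 σ := by
  have hins : ∀ f : U → ℕ, ∑ x ∈ insert b (σ.erase r), f x ≤ f b + ∑ x ∈ σ.erase r, f x := by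
    intro f
    by_cases hb : b ∈ σ.erase r
    · rw [Finset.insert_eq_self.mpr hb]; exact Nat.le_add_left _ _
    · rw [Finset.sum_insert hb]
  have horig : ∀ f : U → ℕ, f r + ∑ x ∈ σ.erase r, f x = ∑ x ∈ σ, f x :=
    fun f => Finset.add_sum_erase σ f hr
  have ho : ∑ x ∈ insert b (σ.erase r), 𝒱.ord x ≤ 𝒱.ord b + ∑ x ∈ σ.erase r, 𝒱.ord x :=
    hins _
  have ho2 : 𝒱.ord r + ∑ x ∈ σ.erase r, 𝒱.ord x = ∑ x ∈ σ, 𝒱.ord x := horig _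
  have hd : ∑ x ∈ insert b (σ.erase r), dcard x ≤ dcard b + ∑ x ∈ σ.erase r, dcard x :=
    hins _
  have hd2 : dcard r + ∑ x ∈ σ.erase r, dcard x = ∑ x ∈ σ, dcard x := horig _
  have hdC : ∑ x ∈ insert b (σ.erase r), dcard x < Fintype.card U * Fintype.card U + 1 :=
    sum_dcard_lt _
  show (∑ x ∈ insert b (σ.erase r), 𝒱.ord x) * (Fintype.card U * Fintype.card U + 1) +
      ∑ x ∈ insert b (σ.erase r), dcard x <
      (∑ x ∈ σ, 𝒱.ord x) * (Fintype.card U * Fintype.card U + 1) + ∑ x ∈ σ, dcard x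
  set C := Fintype.card U * Fintype.card U + 1 with hC
  set o' := ∑ x ∈ insert b (σ.erase r), 𝒱.ord x with ho'
  set o := ∑ x ∈ σ, 𝒱.ord x with hoo
  set d' := ∑ x ∈ insert b (σ.erase r), dcard x with hd'
  set d := ∑ x ∈ σ, dcard x with hdd
  rcases h with h | ⟨h1, h2, h3⟩
  · -- order strictly decreases
    calc o' * C + d' < o' * C + C := by omega
      _ = (o' + 1) * C := by ring
      _ ≤ o * C := Nat.mul_le_mul_right C (by omega)
      _ ≤ o * C + d := Nat.le_add_right _ _
  · -- order weakly decreases, down-set size strictly decreases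
    have hdlt : dcard b < dcard r := dcard_lt_dcard h2 h3
    calc o' * C + d' ≤ o * C + d' := Nat.add_le_add_right (Nat.mul_le_mul_right C (by omega)) _
      _ < o * C + d := by omega

/-- The invariant maintained during the extremal argument. -/
def GoodStar (𝒱 : SubmodUniverse U) (k : ℕ) (P : Set U) (m : ℕ) (σ : Finset U) : Prop :=
  ↑σ ⊆ P ∧ σ.card ≤ m ∧
    ∀ Q : Set U, IsProfile 𝒱.toSepUniverse (Sk 𝒱 k) Q → Regular 𝒱.toSepUniverse Q →
      Q ≠ P → ∃ s ∈ σ, 𝒱.inv s ∈ Q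

/-- Uncrossing a pair of crossing elements preserves the invariant. -/
lemma uncross_good [DecidableEq U] (𝒱 : SubmodUniverse U) {k m : ℕ} {P : Set U}
    (hP : IsProfile 𝒱.toSepUniverse (Sk 𝒱 k) P) (hregP : Regular 𝒱.toSepUniverse P)
    {σ : Finset U} (hσ : GoodStar 𝒱 k P m σ) {r s : U} (hr : r ∈ σ) (hs : s ∈ σ)
    (hrs : r ≠ s) (hcross : ¬ r ≤ 𝒱.inv s) (hord : 𝒱.ord (r ⊓ 𝒱.inv s) ≤ 𝒱.ord r) :
    GoodStar 𝒱 k P m (insert (r ⊓ 𝒱.inv s) (σ.erase r)) := by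
  set b := r ⊓ 𝒱.inv s with hb
  have hrP : r ∈ P := hσ.1 hr
  have hsP : s ∈ P := hσ.1 hs
  have hrSk : r ∈ Sk 𝒱 k := hP.1.1 hrP
  have hbSk : b ∈ Sk 𝒱 k := lt_of_le_of_lt hord hrSk
  have hinvb : 𝒱.inv b = 𝒱.inv r ⊔ s := by
    rw [hb, 𝒱.toSepUniverse.inv_inf, 𝒱.inv_inv]
  have hbP : b ∈ P := by
    rcases down_closed 𝒱.toSepUniverse hP.1 hP.2.1 hrP hbSk inf_le_left with h | h
    · exact h
    · exfalso
      rw [hinvb] at h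
      have h2 : 𝒱.inv r ≤ 𝒱.inv r ⊔ s := le_sup_left
      rw [← h] at h2
      exact hregP r hrP h2
  refine ⟨?_, ?_, ?_⟩
  · intro x hx
    rcases Finset.mem_insert.mp (Finset.mem_coe.mp hx) with h | h
    · exact h ▸ hbP
    · exact hσ.1 (Finset.mem_of_mem_erase h)
  · calc (insert b (σ.erase r)).card ≤ (σ.erase r).card + 1 := Finset.card_insert_le _ _
      _ = σ.card := Finset.card_erase_add_one hr
      _ ≤ m := hσ.2.1
  · intro Q hQ hregQ hQP
    obtain ⟨x, hx, hxQ⟩ := hσ.2.2 Q hQ hregQ hQP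
    by_cases hxr : x = r
    · subst hxr
      have hsSk : s ∈ Sk 𝒱 k := hP.1.1 hsP
      rcases (hQ.1.2 s hsSk).1 with hsQ | hsQ
      · have hnot : 𝒱.inv (𝒱.inv x ⊔ s) ∉ Q := hQ.2.2 (𝒱.inv x) hxQ s hsQ
        have hbeq : 𝒱.inv (𝒱.inv x ⊔ s) = b := by
          rw [𝒱.toSepUniverse.inv_sup, 𝒱.inv_inv, hb]
        rw [hbeq] at hnot
        rcases (hQ.1.2 b hbSk).1 with h | h
        · exact absurd h hnot
        · exact ⟨b, Finset.mem_insert_self _ _, h⟩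
      · exact ⟨s, Finset.mem_insert_of_mem (Finset.mem_erase.mpr ⟨fun h => hrs h.symm, hs⟩),
          hsQ⟩
    · exact ⟨x, Finset.mem_insert_of_mem (Finset.mem_erase.mpr ⟨hxr, hx⟩), hxQ⟩

/-- If `D_P ⊆ P` contains, for every regular `k`-profile
`P' ≠ P`, an efficient `P`–`P'`-distinguisher, and `m` is the number of maximal
elements of `D_P`, then `δ_e(P) ≤ m`: there is a star `σ ⊆ P` of size at most
`m` with `Eff(P)` whose inverse elements meet every other regular `k`-profile. -/
theorem deltaE_le_max_elements (𝒱 : SubmodUniverse U) (k : ℕ)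
    (P : Set U) (hP : IsProfile 𝒱.toSepUniverse (Sk 𝒱 k) P)
    (hreg : Regular 𝒱.toSepUniverse P)
    (D : Set U) (hD : D ⊆ P)
    (hdist : ∀ P' : Set U, IsProfile 𝒱.toSepUniverse (Sk 𝒱 k) P' →
      Regular 𝒱.toSepUniverse P' → P' ≠ P → ∃ s ∈ D, EffDistinguishes 𝒱 s P P')
    (m : ℕ) (hm : m = {s ∈ D | ∀ t ∈ D, s ≤ t → s = t}.ncard) :
    ∃ σ : Set U, σ ⊆ P ∧ IsStar 𝒱.toSepUniverse σ ∧ EffProp 𝒱 σ P ∧ σ.ncard ≤ m ∧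
      ∀ Q : Set U, IsProfile 𝒱.toSepUniverse (Sk 𝒱 k) Q → Regular 𝒱.toSepUniverse Q →
        Q ≠ P → ∃ s ∈ σ, 𝒱.inv s ∈ Q := by
  classical
  -- The set of maximal elements of `D`, as a finset.
  set Mx : Set U := {s ∈ D | ∀ t ∈ D, s ≤ t → s = t} with hMxdef
  have hMxfin : Mx.Finite := Set.toFinite _
  have hMgood : GoodStar 𝒱 k P m hMxfin.toFinset := by
    refine ⟨?_, ?_, ?_⟩
    · intro x hx
      have hx' : x ∈ Mx := by
        rwa [Finset.mem_coe, Set.Finite.mem_toFinset] at hx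
      exact hD hx'.1
    · rw [hm, Set.ncard_eq_toFinset_card Mx hMxfin]
    · intro Q hQ hregQ hQP
      obtain ⟨s, hsD, hsdist⟩ := hdist Q hQ hregQ hQP
      have hsP : s ∈ P := hD hsD
      have hsQ : 𝒱.inv s ∈ Q := by
        rcases hsdist.1 with ⟨_, h⟩ | ⟨h1, _⟩
        · exact h
        · exact absurd h1 (not_inv_mem 𝒱.toSepUniverse hP hreg hsP)
      have hne : ({x ∈ D | s ≤ x}).Nonempty := ⟨s, hsD, le_refl s⟩
      obtain ⟨t, ⟨htD, hst⟩, htmax⟩ :=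
        Set.Finite.exists_maximalFor id _ (Set.toFinite {x ∈ D | s ≤ x}) hne
      have htMx : t ∈ Mx := ⟨htD, fun u hu htu => le_antisymm htu (htmax ⟨hu, le_trans hst htu⟩ htu)⟩
      exact ⟨t, Set.Finite.mem_toFinset hMxfin |>.mpr htMx,
        cover_trans 𝒱 hP hreg hQ hsP (hD htD) hst hsQ⟩
  -- Choose a good finset minimizing the potential.
  set 𝒩 : Set ℕ := {n | ∃ τ : Finset U, GoodStar 𝒱 k P m τ ∧ psi 𝒱 τ = n} with h𝒩def
  have h𝒩ne : 𝒩.Nonempty := ⟨psi 𝒱 hMxfin.toFinset, hMxfin.toFinset, hMgood, rfl⟩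
  obtain ⟨σ₀, hσ₀, hσ₀psi⟩ := Nat.sInf_mem h𝒩ne
  have hmin : ∀ τ : Finset U, GoodStar 𝒱 k P m τ → psi 𝒱 σ₀ ≤ psi 𝒱 τ := by
    intro τ hτ
    rw [hσ₀psi]
    exact Nat.sInf_le ⟨τ, hτ, rfl⟩
  -- The minimizer satisfies `Eff(P)`.
  have heff : EffProp 𝒱 ↑σ₀ P := by
    rintro ⟨s, hs, s', hs'P, hss', hord⟩
    have hsσ : s ∈ σ₀ := Finset.mem_coe.mp hs
    have hsP : s ∈ P := hσ₀.1 hs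
    have hgood' : GoodStar 𝒱 k P m (insert s' (σ₀.erase s)) := by
      refine ⟨?_, ?_, ?_⟩
      · intro x hx
        rcases Finset.mem_insert.mp (Finset.mem_coe.mp hx) with h | h
        · exact h ▸ hs'P
        · exact hσ₀.1 (Finset.mem_of_mem_erase h)
      · calc (insert s' (σ₀.erase s)).card ≤ (σ₀.erase s).card + 1 :=
              Finset.card_insert_le _ _
          _ = σ₀.card := Finset.card_erase_add_one hsσ
          _ ≤ m := hσ₀.2.1
      · intro Q hQ hregQ hQP
        obtain ⟨x, hx, hxQ⟩ := hσ₀.2.2 Q hQ hregQ hQP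
        by_cases hxs : x = s
        · subst hxs
          exact ⟨s', Finset.mem_insert_self _ _,
            cover_trans 𝒱 hP hreg hQ hsP hs'P hss' hxQ⟩
        · exact ⟨x, Finset.mem_insert_of_mem (Finset.mem_erase.mpr ⟨hxs, hx⟩), hxQ⟩
    exact absurd (hmin _ hgood') (not_le.mpr (psi_replace_lt 𝒱 hsσ (Or.inl hord)))
  -- The minimizer is a star.
  have hstar : IsStar 𝒱.toSepUniverse ↑σ₀ := by
    intro r hr s hs hrs
    by_contra hcross
    have hr' : r ∈ σ₀ := Finset.mem_coe.mp hr
    have hs' : s ∈ σ₀ := Finset.mem_coe.mp hs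
    have hsub := 𝒱.submod r (𝒱.inv s)
    rw [𝒱.ord_inv] at hsub
    have hords : 𝒱.ord (r ⊔ 𝒱.inv s) = 𝒱.ord (s ⊓ 𝒱.inv r) := by
      rw [← 𝒱.ord_inv (r ⊔ 𝒱.inv s), 𝒱.toSepUniverse.inv_sup, 𝒱.inv_inv, inf_comm]
    have hcase : 𝒱.ord (r ⊓ 𝒱.inv s) ≤ 𝒱.ord r ∨ 𝒱.ord (s ⊓ 𝒱.inv r) ≤ 𝒱.ord s := by
      omega
    rcases hcase with h | h
    · have hg := uncross_good 𝒱 hP hreg hσ₀ hr' hs' hrs hcross h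
      have hbne : r ⊓ 𝒱.inv s ≠ r := fun hEq => hcross (inf_eq_left.mp hEq)
      exact absurd (hmin _ hg)
        (not_le.mpr (psi_replace_lt 𝒱 hr' (Or.inr ⟨h, inf_le_left, hbne⟩)))
    · have hcross' : ¬ s ≤ 𝒱.inv r := fun hle =>
        hcross ((𝒱.toSepUniverse.le_inv_iff s r).mp hle)
      have hg := uncross_good 𝒱 hP hreg hσ₀ hs' hr' (Ne.symm hrs) hcross' h
      have hbne : s ⊓ 𝒱.inv r ≠ s := fun hEq => hcross' (inf_eq_left.mp hEq)
      exact absurd (hmin _ hg)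
        (not_le.mpr (psi_replace_lt 𝒱 hs' (Or.inr ⟨h, inf_le_left, hbne⟩)))
  refine ⟨↑σ₀, hσ₀.1, hstar, heff, ?_, ?_⟩
  · rw [Set.ncard_coe_finset]
    exact hσ₀.2.1
  · intro Q hQ hregQ hQP
    obtain ⟨x, hx, hxQ⟩ := hσ₀.2.2 Q hQ hregQ hQP
    exact ⟨x, Finset.mem_coe.mpr hx, hxQ⟩

end SepDemo
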